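/- Suppose t^n ≠ 1. Then the matrices I - M and I - M^{-1} are invertible, and (I - X^{-s}) · (I - M^{-1})^{-1} · (I - Y^{-r}) = -(I - Y^{r}) · (I - M)^{-1} · (I - X^{s}). -/

import Mathlib

open Matrix
open Fin.NatCast Fin.CommRing

section Aux

variable {m : ℕ} [NeZero m]

/-- the matrix with `f i` in position `(i, i + a)` (cyclically) and zeros elsewhere -/
def smat (a : Fin m) (f : Fin m → ℂ) : Matrix (Fin m) (Fin m) ℂ :=
  Matrix.of fun i j => if i + a = j then f i else 0

theorem smat_mul (a b : Fin m) (f g : Fin m → ℂ) :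
    smat a f * smat b g = smat (a + b) fun i => f i * g (i + a) := by
  ext i j
  simp only [smat, Matrix.mul_apply, Matrix.of_apply]
  rw [Finset.sum_eq_single (i + a)]
  · rw [if_pos rfl, ← add_assoc, mul_ite, mul_zero]
  · intro l _ hl
    rw [if_neg fun h => hl h.symm, zero_mul]
  · intro h
    exact absurd (Finset.mem_univ _) h

theorem smat_zero (f : Fin m → ℂ) : smat (0 : Fin m) f = Matrix.diagonal f := by
  ext i j
  simp [smat, Matrix.diagonal_apply]

theorem smat_pow (a : Fin m) (f : Fin m → ℂ) (k : ℕ) :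
    smat a f ^ k = smat (k • a) fun i => ∏ j ∈ Finset.range k, f (i + j • a) := by
  induction k with
  | zero => simp [smat_zero]
  | succ k ih =>
      rw [pow_succ', ih, smat_mul, succ_nsmul, add_comm (k • a) a]
      have hf : (fun i => f i * ∏ j ∈ Finset.range k, f (i + a + j • a)) =
          fun i : Fin m => ∏ j ∈ Finset.range (k + 1), f (i + j • a) := by
        funext i
        rw [Finset.prod_range_succ']
        simp only [zero_smul, add_zero]
        rw [mul_comm]
        congr 1
        refine Finset.prod_congr rfl fun j _ => ?_
        rw [succ_nsmul', ← add_assoc]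
      rw [hf]

theorem prod_shift (f : Fin m → ℂ) (a : Fin m) :
    ∏ x : Fin m, f (x + a) = ∏ x : Fin m, f x :=
  Fintype.prod_equiv (Equiv.addRight a) _ _ fun x => rfl

theorem prod_range_cyclic (f : Fin m → ℂ) (i : Fin m) :
    ∏ j ∈ Finset.range m, f (i + (j : Fin m)) = ∏ x : Fin m, f x := by
  rw [← Fin.prod_univ_eq_prod_range (fun j : ℕ => f (i + (j : Fin m))) m]
  simp only [Fin.cast_val_eq_self]
  exact Fintype.prod_equiv (Equiv.addLeft i) _ _ fun x => rfl

theorem matrix_isUnit_left {p : ℕ} {A B : Matrix (Fin p) (Fin p) ℂ}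
    (h : IsUnit (A * B)) : IsUnit A := by
  rw [Matrix.isUnit_iff_isUnit_det] at h ⊢
  rw [Matrix.det_mul] at h
  exact isUnit_of_mul_isUnit_left h

theorem matrix_isUnit_right {p : ℕ} {A B : Matrix (Fin p) (Fin p) ℂ}
    (h : IsUnit (A * B)) : IsUnit B := by
  rw [Matrix.isUnit_iff_isUnit_det] at h ⊢
  rw [Matrix.det_mul] at h
  exact isUnit_of_mul_isUnit_right h

theorem smul_one_isUnit {p : ℕ} {u : ℂ} (hu : u ≠ 0) :
    IsUnit (u • (1 : Matrix (Fin p) (Fin p) ℂ)) := by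
  refine isUnit_iff_exists.mpr ⟨u⁻¹ • 1, ?_, ?_⟩ <;>
    rw [smul_mul_smul_comm, mul_one] <;>
    first
      | rw [mul_inv_cancel₀ hu, one_smul]
      | rw [inv_mul_cancel₀ hu, one_smul]

theorem pow_smul_isUnit {p k : ℕ} (hk : k ≠ 0) {N : Matrix (Fin p) (Fin p) ℂ} {u : ℂ}
    (hN : N ^ k = u • 1) (hu : u ≠ 0) : IsUnit N := by
  have h1 : N * (u⁻¹ • N ^ (k - 1)) = 1 := by
    rw [mul_smul_comm, ← pow_succ', Nat.sub_add_cancel (Nat.one_le_iff_ne_zero.mpr hk), hN,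
      smul_smul, inv_mul_cancel₀ hu, one_smul]
  have h2 : (u⁻¹ • N ^ (k - 1)) * N = 1 := by
    rw [smul_mul_assoc, ← pow_succ, Nat.sub_add_cancel (Nat.one_le_iff_ne_zero.mpr hk), hN,
      smul_smul, inv_mul_cancel₀ hu, one_smul]
  exact isUnit_iff_exists.mpr ⟨_, h1, h2⟩

theorem one_sub_isUnit {p k : ℕ} (hk : k ≠ 0) {N : Matrix (Fin p) (Fin p) ℂ} {u : ℂ}
    (hN : N ^ k = u • 1) (hu : u ≠ 1) : IsUnit (1 - N) := by
  have h : (∑ i ∈ Finset.range k, N ^ i) * (N - 1) = (u - 1) • 1 := by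
    rw [geom_sum_mul, hN, sub_smul, one_smul]
  have hunit : IsUnit ((∑ i ∈ Finset.range k, N ^ i) * (N - 1)) := by
    rw [h]; exact smul_one_isUnit (sub_ne_zero.mpr hu)
  have := (matrix_isUnit_right hunit).neg
  rwa [neg_sub] at this

theorem key_identity {p : ℕ} {A B M : Matrix (Fin p) (Fin p) ℂ} (hM : M = A * B)
    (hA : IsUnit A) (hB : IsUnit B) (hU : IsUnit (1 - M)) (hV : IsUnit (1 - M⁻¹)) :
    (1 - A⁻¹) * (1 - M⁻¹)⁻¹ * (1 - B⁻¹) = -((1 - B) * (1 - M)⁻¹ * (1 - A)) := by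
  have hMu : IsUnit M := hM ▸ hA.mul hB
  have hMd := (Matrix.isUnit_iff_isUnit_det _).mp hMu
  have hAd := (Matrix.isUnit_iff_isUnit_det _).mp hA
  have hBd := (Matrix.isUnit_iff_isUnit_det _).mp hB
  have hUd := (Matrix.isUnit_iff_isUnit_det _).mp hU
  have hMM' : M⁻¹ * M = 1 := Matrix.nonsing_inv_mul _ hMd
  have hAA : A * A⁻¹ = 1 := Matrix.mul_nonsing_inv _ hAd
  have hAA' : A⁻¹ * A = 1 := Matrix.nonsing_inv_mul _ hAd
  have hBB : B * B⁻¹ = 1 := Matrix.mul_nonsing_inv _ hBd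
  have hUU : (1 - M) * (1 - M)⁻¹ = 1 := Matrix.mul_nonsing_inv _ hUd
  have hUU' : (1 - M)⁻¹ * (1 - M) = 1 := Matrix.nonsing_inv_mul _ hUd
  have hV1 : (1 : Matrix (Fin p) (Fin p) ℂ) - M⁻¹ = M⁻¹ * (M - 1) := by
    rw [mul_sub, hMM', mul_one]
  have hVinv : (1 - M⁻¹)⁻¹ = -((1 - M)⁻¹ * M) := by
    refine Matrix.inv_eq_right_inv ?_
    rw [hV1]
    calc M⁻¹ * (M - 1) * -((1 - M)⁻¹ * M)
        = M⁻¹ * ((1 - M) * (1 - M)⁻¹ * M) := by noncomm_ring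
      _ = 1 := by rw [hUU, one_mul, hMM']
  have e1 : (1 : Matrix (Fin p) (Fin p) ℂ) - A⁻¹ = -(A⁻¹ * (1 - A)) := by
    rw [mul_sub, hAA', mul_one, neg_sub]
  have e2 : M * (1 - B⁻¹) = M - A := by
    rw [mul_sub, mul_one, hM, mul_assoc, hBB, mul_one]
  have e3 : (1 : Matrix (Fin p) (Fin p) ℂ) - B = A⁻¹ * (A - M) := by
    rw [mul_sub, hAA', hM, ← mul_assoc, hAA', one_mul]
  have e4 : M - A = (1 - A) - (1 - M) := by noncomm_ring
  have hL : (1 - A⁻¹) * (1 - M⁻¹)⁻¹ * (1 - B⁻¹) =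
      A⁻¹ * ((1 - A) * (1 - M)⁻¹ * (1 - A) - (1 - A)) := by
    calc (1 - A⁻¹) * (1 - M⁻¹)⁻¹ * (1 - B⁻¹)
        = -(A⁻¹ * (1 - A)) * -((1 - M)⁻¹ * M) * (1 - B⁻¹) := by rw [← e1, hVinv]
      _ = A⁻¹ * ((1 - A) * (1 - M)⁻¹ * (M * (1 - B⁻¹))) := by noncomm_ring
      _ = A⁻¹ * ((1 - A) * (1 - M)⁻¹ * ((1 - A) - (1 - M))) := by rw [e2, e4]
      _ = A⁻¹ * ((1 - A) * (1 - M)⁻¹ * (1 - A) - (1 - A) * ((1 - M)⁻¹ * (1 - M))) := by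
          noncomm_ring
      _ = A⁻¹ * ((1 - A) * (1 - M)⁻¹ * (1 - A) - (1 - A)) := by rw [hUU', mul_one]
  have hR : -((1 - B) * (1 - M)⁻¹ * (1 - A)) =
      A⁻¹ * ((1 - A) * (1 - M)⁻¹ * (1 - A) - (1 - A)) := by
    calc -((1 - B) * (1 - M)⁻¹ * (1 - A))
        = -(A⁻¹ * (A - M) * (1 - M)⁻¹ * (1 - A)) := by rw [e3]
      _ = A⁻¹ * (((1 - A) - (1 - M)) * ((1 - M)⁻¹ * (1 - A))) := by
          rw [show A - M = -((1 - A) - (1 - M)) by rw [← e4]; noncomm_ring]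
          noncomm_ring
      _ = A⁻¹ * ((1 - A) * (1 - M)⁻¹ * (1 - A) - (1 - M) * (1 - M)⁻¹ * (1 - A)) := by
          noncomm_ring
      _ = A⁻¹ * ((1 - A) * (1 - M)⁻¹ * (1 - A) - (1 - A)) := by rw [hUU, one_mul]
  rw [hL, hR]

end Aux

/-- If `t^n ≠ 1` then `I - M` and `I - M⁻¹` are invertible and
`(I - X^(-s))(I - M⁻¹)⁻¹(I - Y^(-r)) = -(I - Y^r)(I - M)⁻¹(I - X^s)`. -/
theorem stmt_17 (m n : ℕ) (hm : 1 < m) (hn : 1 < n) (hmn : Nat.Coprime m n)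
    (r s : ℤ) (hbezout : (m : ℤ) * r + (n : ℤ) * s = 1)
    (hr₁ : -(n : ℤ) < r) (hr₂ : r < 0) (hs₁ : 0 < s) (hs₂ : s < (m : ℤ))
    (t : ℂ) (ht0 : t ≠ 0) (htn : t ^ n ≠ 1)
    (b : Fin m → ℤ) (hb : (n : ℤ) ∣ ∑ i, b i)
    (C X Y M : Matrix (Fin m) (Fin m) ℂ)
    (hC : ∀ i j : Fin m, C i j =
      if (i : ℕ) + 1 = (j : ℕ) then 1
      else if (i : ℕ) = m - 1 ∧ (j : ℕ) = 0 then t else 0)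
    (hX : X = C ^ n)
    (hY : Y = t • Matrix.diagonal
      (fun i => Complex.exp (2 * (Real.pi : ℂ) * Complex.I * (b i : ℂ) / (n : ℂ))))
    (hM : M = X ^ s * Y ^ r) :
    IsUnit (1 - M) ∧ IsUnit (1 - M⁻¹) ∧
    (1 - X ^ (-s)) * (1 - M⁻¹)⁻¹ * (1 - Y ^ (-r)) =
      -((1 - Y ^ r) * (1 - M)⁻¹ * (1 - X ^ s)) := by
  haveI : NeZero m := ⟨by omega⟩
  have hm0 : m ≠ 0 := by omega
  set s' : ℕ := s.toNat with hs'def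
  set r' : ℕ := (-r).toNat with hr'def
  have hs' : (s' : ℤ) = s := Int.toNat_of_nonneg hs₁.le
  have hr' : (r' : ℤ) = -r := Int.toNat_of_nonneg (by omega)
  have hns : n * s' = m * r' + 1 := by
    have h : (↑(n * s') : ℤ) = ↑(m * r' + 1) := by push_cast [hs', hr']; linarith
    exact_mod_cast h
  -- the weight function of `C`
  set c : Fin m → ℂ := fun i => if (i : ℕ) = m - 1 then t else 1 with hc
  -- `C` as a cyclic weighted shift
  have hadd1 : ∀ i : Fin m, ((i + 1 : Fin m) : ℕ) = if (i : ℕ) = m - 1 then 0 else (i : ℕ) + 1 := by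
    intro i
    have h1 : ((1 : Fin m) : ℕ) = 1 := by rw [Fin.val_one']; exact Nat.mod_eq_of_lt hm
    rw [Fin.val_add, h1]
    by_cases h : (i : ℕ) = m - 1
    · rw [if_pos h, h, Nat.sub_add_cancel (by omega), Nat.mod_self]
    · rw [if_neg h, Nat.mod_eq_of_lt (by have := i.isLt; omega)]
  have hCs : C = smat 1 c := by
    ext i j
    rw [hC]
    simp only [smat, Matrix.of_apply]
    by_cases h : (i : ℕ) = m - 1
    · have hne : ¬((i : ℕ) + 1 = (j : ℕ)) := by have := j.isLt; omega
      rw [if_neg hne]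
      by_cases hj : (j : ℕ) = 0
      · have hij : i + 1 = j := by
          apply Fin.ext; rw [hadd1 i, if_pos h]; exact hj.symm
        rw [if_pos ⟨h, hj⟩, if_pos hij]
        simp [hc, h]
      · have hij : ¬(i + 1 = j) := fun hh => hj (by rw [← hh, hadd1 i, if_pos h])
        rw [if_neg (fun hh => hj hh.2), if_neg hij]
    · by_cases hij : (i : ℕ) + 1 = (j : ℕ)
      · have hij' : i + 1 = j := by
          apply Fin.ext; rw [hadd1 i, if_neg h]; exact hij
        rw [if_pos hij, if_pos hij']
        simp [hc, h]
      · have hij' : ¬(i + 1 = j) := fun hh => hij (by rw [← hh, hadd1 i, if_neg h])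
        rw [if_neg hij, if_neg (fun hh => h hh.1), if_neg hij']
  -- the diagonal of `Y`
  set dd : Fin m → ℂ :=
    fun i => t * Complex.exp (2 * (Real.pi : ℂ) * Complex.I * (b i : ℂ) / (n : ℂ)) with hdd
  have hYdiag : Y = Matrix.diagonal dd := by
    rw [hY]
    ext i j
    by_cases h : i = j <;> simp [Matrix.diagonal_apply, h, hdd]
  have hdd0 : ∀ i, dd i ≠ 0 := fun i => mul_ne_zero ht0 (Complex.exp_ne_zero _)
  have hYdet : IsUnit Y.det := by
    rw [hYdiag, Matrix.det_diagonal]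
    exact isUnit_iff_ne_zero.mpr (Finset.prod_ne_zero_iff.mpr fun i _ => hdd0 i)
  set g : Fin m → ℂ := fun i => (dd i ^ r')⁻¹ with hg
  have hYr : Y ^ r = Matrix.diagonal g := by
    have hrr : r = -(r' : ℤ) := by omega
    rw [hrr, Matrix.zpow_neg hYdet, zpow_natCast, hYdiag, Matrix.diagonal_pow]
    refine Matrix.inv_eq_right_inv ?_
    rw [Matrix.diagonal_mul_diagonal]
    have h1 : (fun i => (dd ^ r') i * g i) = fun _ : Fin m => (1 : ℂ) := by
      funext i
      simp only [Pi.pow_apply]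
      exact mul_inv_cancel₀ (pow_ne_zero _ (hdd0 i))
    rw [h1, Matrix.diagonal_one]
  have hXs : X ^ s = smat 1 c ^ (n * s') := by
    rw [show s = (s' : ℤ) from hs'.symm, zpow_natCast, hX, ← pow_mul, hCs]
  have hconv : ∀ j : ℕ, j • (1 : Fin m) = (j : Fin m) := fun j => by
    rw [nsmul_eq_mul, mul_one]
  have hsm1 : (n * s') • (1 : Fin m) = 1 := by
    rw [hconv, hns]
    push_cast [Fin.natCast_self]
    ring
  set F : Fin m → ℂ := fun i => ∏ j ∈ Finset.range (n * s'), c (i + (j : Fin m)) with hF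
  have hMform : M = smat 1 fun i => F i * g (i + 1) := by
    rw [hM, hXs, hYr, smat_pow, ← smat_zero, smat_mul, hsm1, add_zero]
    congr 1
    funext i
    simp only [hconv, hF]
  -- the total products
  have hcprod : ∏ x : Fin m, c x = t := by
    rw [Finset.prod_eq_single (⟨m - 1, by omega⟩ : Fin m)]
    · rw [hc]; simp
    · intro x _ hx
      rw [hc]
      simp only []
      rw [if_neg fun h => hx (Fin.ext (by simpa using h))]
    · intro h; exact absurd (Finset.mem_univ _) h
  have hFprod : ∏ x : Fin m, F x = t ^ (n * s') := by
    rw [hF]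
    rw [Finset.prod_comm]
    have : ∀ j ∈ Finset.range (n * s'), ∏ x : Fin m, c (x + (j : Fin m)) = t :=
      fun j _ => (prod_shift c _).trans hcprod
    rw [Finset.prod_congr rfl this, Finset.prod_const, Finset.card_range]
  have hddprod : ∏ x : Fin m, dd x = t ^ m := by
    obtain ⟨k, hk⟩ := hb
    have hnne : (n : ℂ) ≠ 0 := Nat.cast_ne_zero.mpr (by omega)
    rw [hdd]
    rw [Finset.prod_mul_distrib, Finset.prod_const, Finset.card_univ, Fintype.card_fin,
      ← Complex.exp_sum]
    have hsum : (∑ i, 2 * (Real.pi : ℂ) * Complex.I * (b i : ℂ) / (n : ℂ)) =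
        (k : ℂ) * (2 * (Real.pi : ℂ) * Complex.I) := by
      rw [← Finset.sum_div, ← Finset.mul_sum, ← Int.cast_sum, hk]
      push_cast
      field_simp
    rw [hsum, Complex.exp_int_mul_two_pi_mul_I, mul_one]
  have hgprod : ∏ x : Fin m, g x = (t ^ (m * r'))⁻¹ := by
    rw [hg]
    rw [Finset.prod_inv_distrib, Finset.prod_pow, hddprod, ← pow_mul]
  have hGfun : ∀ i : Fin m,
      ∏ j ∈ Finset.range m, (F (i + (j : Fin m)) * g (i + (j : Fin m) + 1)) = t := by
    intro i
    calc ∏ j ∈ Finset.range m, (F (i + (j : Fin m)) * g (i + (j : Fin m) + 1))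
        = ∏ x : Fin m, (F x * g (x + 1)) := prod_range_cyclic (fun x => F x * g (x + 1)) i
      _ = (∏ x : Fin m, F x) * ∏ x : Fin m, g (x + 1) := Finset.prod_mul_distrib
      _ = t ^ (n * s') * ∏ x : Fin m, g x := by rw [hFprod, prod_shift g 1]
      _ = t ^ (n * s') * (t ^ (m * r'))⁻¹ := by rw [hgprod]
      _ = t := by
          rw [hns, pow_succ, mul_comm (t ^ (m * r')) t, mul_assoc,
            mul_inv_cancel₀ (pow_ne_zero _ ht0), mul_one]
  have hMm : M ^ m = t • (1 : Matrix (Fin m) (Fin m) ℂ) := by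
    have h0 : m • (1 : Fin m) = 0 := by rw [hconv, Fin.natCast_self]
    rw [hMform, smat_pow, h0, smat_zero, Matrix.smul_one_eq_diagonal]
    exact congrArg Matrix.diagonal (funext fun i => by simpa only [hconv] using hGfun i)
  have ht1 : t ≠ 1 := fun h => htn (by rw [h, one_pow])
  have hMunit : IsUnit M := pow_smul_isUnit hm0 hMm ht0
  have h1M : IsUnit (1 - M) := one_sub_isUnit hm0 hMm ht1
  have hMinvm : M⁻¹ ^ m = t⁻¹ • (1 : Matrix (Fin m) (Fin m) ℂ) := by
    rw [Matrix.inv_pow', hMm]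
    refine Matrix.inv_eq_right_inv ?_
    rw [smul_mul_smul_comm, mul_one, mul_inv_cancel₀ ht0, one_smul]
  have ht1' : t⁻¹ ≠ 1 := fun h => ht1 (by rwa [inv_eq_one] at h)
  have h1Minv : IsUnit (1 - M⁻¹) := one_sub_isUnit hm0 hMinvm ht1'
  have hABu : IsUnit (X ^ s * Y ^ r) := hM ▸ hMunit
  have hAu : IsUnit (X ^ s) := matrix_isUnit_left hABu
  have hBu : IsUnit (Y ^ r) := matrix_isUnit_right hABu
  have hXdet : IsUnit X.det := by
    have h := (Matrix.isUnit_iff_isUnit_det _).mp hAu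
    rw [Matrix.isUnit_det_zpow_iff] at h
    rcases h with h | h
    · exact h
    · omega
  have hXneg : X ^ (-s) = (X ^ s)⁻¹ := Matrix.zpow_neg hXdet s
  have hYneg : Y ^ (-r) = (Y ^ r)⁻¹ := Matrix.zpow_neg hYdet r
  refine ⟨h1M, h1Minv, ?_⟩
  rw [hXneg, hYneg]
  exact key_identity hM hAu hBu h1M h1Minv
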